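/- Let S be a semigroup that is the disjoint union of free monogenic subsemigroups ⟨a⟩, ⟨b⟩, ⟨c⟩, and suppose ab = ba = a^i, ac = c², ca = a², bc = c^j, cb = a^k for positive integers i, j, k. Then i = j = k. -/
import Mathlib


/-- `pw a n` is `a ^ n` for `n ≥ 1` (with junk value `a` at `n = 0`),
defined in any magma. -/
def pw {S : Type*} [Mul S] (a : S) : ℕ → S
  | 0 => a
  | 1 => a
  | n + 2 => pw a (n + 1) * a

/-- The monogenic subsemigroup `⟨a⟩ = {a^n : n ≥ 1}`. -/
def genSet {S : Type*} [Mul S] (a : S) : Set S := {x | ∃ n, 1 ≤ n ∧ pw a n = x}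

/-- `a` has infinite order: its positive powers are pairwise distinct,
i.e. `⟨a⟩` is free monogenic. -/
def InfOrder {S : Type*} [Mul S] (a : S) : Prop :=
  ∀ m n : ℕ, 1 ≤ m → 1 ≤ n → pw a m = pw a n → m = n

lemma pw_succ {S : Type*} [Mul S] (a : S) (n : ℕ) (hn : 1 ≤ n) :
    pw a (n + 1) = pw a n * a := by
  match n with
  | m + 1 => rfl

lemma pw_succ' {S : Type*} [Semigroup S] (a : S) (n : ℕ) (hn : 1 ≤ n) :
    pw a (n + 1) = a * pw a n := by
  induction n with
  | zero => omega
  | succ m ih =>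
    rcases Nat.eq_zero_or_pos m with h | hm
    · subst h; simp [pw]
    · rw [pw_succ a (m+1) hn, ih hm, mul_assoc, ← pw_succ a m hm, ih hm]

lemma pw_add {S : Type*} [Semigroup S] (a : S) (m n : ℕ) (hm : 1 ≤ m) (hn : 1 ≤ n) :
    pw a m * pw a n = pw a (m + n) := by
  induction n with
  | zero => omega
  | succ p ih =>
    rcases Nat.eq_or_lt_of_le hn with h | h
    · have : p = 0 := by omega
      subst this
      show pw a m * a = pw a (m + 1)
      rw [pw_succ a m hm]
    · have hp : 1 ≤ p := by omega
      rw [pw_succ a p hp, ← mul_assoc, ih hp, ← pw_succ a (m + p) (by omega)]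
      ring_nf

theorem stmt_15 {S : Type*} [Semigroup S] (a b c : S)
    (ha : InfOrder a) (hb : InfOrder b) (hc : InfOrder c)
    (hab : genSet a ∩ genSet b = ∅) (hac : genSet a ∩ genSet c = ∅)
    (hbc : genSet b ∩ genSet c = ∅)
    (hcover : genSet a ∪ genSet b ∪ genSet c = Set.univ)
    (i j k : ℕ) (hi : 1 ≤ i) (hj : 1 ≤ j) (hk : 1 ≤ k)
    (h1 : a * b = pw a i) (h2 : b * a = pw a i)
    (h3 : a * c = pw c 2) (h4 : c * a = pw a 2)
    (h5 : b * c = pw c j) (h6 : c * b = pw a k) :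
    i = j ∧ j = k := by
  -- a * c^n = c^(n+1)
  have hacp : ∀ n, 1 ≤ n → a * pw c n = pw c (n + 1) := by
    intro n hn
    induction n with
    | zero => omega
    | succ p ih =>
      rcases Nat.eq_zero_or_pos p with h | hp
      · subst h; exact h3
      · rw [pw_succ c p hp, ← mul_assoc, ih hp, ← pw_succ c (p+1) (by omega)]
  -- a^n * c = c^(n+1)
  have hapc : ∀ n, 1 ≤ n → pw a n * c = pw c (n + 1) := by
    intro n hn
    induction n with
    | zero => omega
    | succ p ih =>
      rcases Nat.eq_zero_or_pos p with h | hp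
      · subst h; exact h3
      · rw [pw_succ' a p hp, mul_assoc, ih hp, hacp (p+1) (by omega)]
  -- c * a^n = a^(n+1)
  have hcap : ∀ n, 1 ≤ n → c * pw a n = pw a (n + 1) := by
    intro n hn
    induction n with
    | zero => omega
    | succ p ih =>
      rcases Nat.eq_zero_or_pos p with h | hp
      · subst h; exact h4
      · rw [pw_succ a p hp, ← mul_assoc, ih hp, ← pw_succ a (p+1) (by omega)]
  -- c^m * a^n = a^(n+m)
  have hcpap : ∀ m n, 1 ≤ m → 1 ≤ n → pw c m * pw a n = pw a (n + m) := by
    intro m n hm hn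
    induction m with
    | zero => omega
    | succ p ih =>
      rcases Nat.eq_zero_or_pos p with h | hp
      · subst h; exact hcap n hn
      · rw [pw_succ' c p hp, mul_assoc, ih hp, hcap (n+p) (by omega)]
        rfl
  -- First: j = k via a*c*b*c
  have e1 : pw c (j + 2) = pw c (k + 2) := by
    have lhs : a * c * b * c = pw c (j + 2) := by
      rw [mul_assoc (a * c) b c, h5, h3, pw_add c 2 j (by omega) hj]
      ring_nf
    have rhs : a * c * b * c = pw c (k + 2) := by
      rw [mul_assoc a c b, h6,
        show a * pw a k = pw a (1 + k) from pw_add a 1 k le_rfl hk,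
        hapc (1 + k) (by omega)]
      congr 1; omega
    rw [← lhs, rhs]
  have hjk : j = k := by
    have := hc (j + 2) (k + 2) (by omega) (by omega) e1
    omega
  -- Second: i = j via a*b*c*b
  have e2 : pw a (i + k) = pw a (k + j) := by
    have lhs : a * b * c * b = pw a (i + k) := by
      rw [mul_assoc (a * b) c b, h6, h1, pw_add a i k hi hk]
    have rhs : a * b * c * b = pw a (k + j) := by
      rw [mul_assoc a b c, h5, hacp j hj, pw_succ c j hj, mul_assoc, h6,
        hcpap j k hj hk]
    rw [← lhs, rhs]
  have hij : i = j := by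
    have := ha (i + k) (k + j) (by omega) (by omega) e2
    omega
  exact ⟨hij, hjk⟩
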